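/- Let I ⊆ k[x_1,…,x_n] be an ideal and let ℚ^r carry the lexicographic order. (1) If M ∈ ℚ^{r×n} has all entries ≤ 0, then there exists a monomial order > on k[x_1,…,x_n] with in_>(in_M(I)) = in_>(I); in other words, the set of matrices with all columns in ℚ_{≤0}^r is contained in the rank-r Gröbner region GR^r(I). (2) If I is homogeneous with respect to a grading assigning each x_i a positive integer degree d_i, then for every M ∈ ℚ^{r×n} there exists a monomial order > with in_>(in_M(I)) = in_>(I), i.e. GR^r(I) = ℚ^{r×n}. -/

import Mathlib

open MvPolynomial

instance finWellFoundedLT {r : ℕ} : WellFoundedLT (Fin r) := Finite.to_wellFoundedLT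

/-- The initial form of a polynomial with respect to a comparison `le` on exponent vectors:
the sum of the terms of `f` whose exponent is `le`-minimal in the support of `f`.
For a total order this is the single `le`-smallest term of `f`. -/
noncomputable def initialForm {k : Type} [Field k] {n : ℕ}
    (le : (Fin n →₀ ℕ) → (Fin n →₀ ℕ) → Prop)
    (f : MvPolynomial (Fin n) k) : MvPolynomial (Fin n) k :=
  letI := Classical.decPred fun α : Fin n →₀ ℕ => ∀ β ∈ f.support, le α β
  ∑ α ∈ f.support.filter (fun α => ∀ β ∈ f.support, le α β),
    monomial α (MvPolynomial.coeff α f)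

/-- The initial ideal of `I`: the ideal generated by initial forms of nonzero elements of `I`. -/
noncomputable def initialIdeal {k : Type} [Field k] {n : ℕ}
    (le : (Fin n →₀ ℕ) → (Fin n →₀ ℕ) → Prop)
    (I : Ideal (MvPolynomial (Fin n) k)) : Ideal (MvPolynomial (Fin n) k) :=
  Ideal.span {g | ∃ f ∈ I, f ≠ 0 ∧ g = initialForm le f}

/-- The weight `Mα ∈ ℚ^r` of an exponent vector `α` under the weighting matrix `M`. -/
def mwt {n r : ℕ} (M : Matrix (Fin r) (Fin n) ℚ) (α : Fin n →₀ ℕ) : Fin r → ℚ :=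
  fun i => ∑ j, M i j * (α j : ℚ)

/-- Comparison of exponents by `M`-weight, in the lexicographic order on `ℚ^r`. -/
def mLe {n r : ℕ} (M : Matrix (Fin r) (Fin n) ℚ) : (Fin n →₀ ℕ) → (Fin n →₀ ℕ) → Prop :=
  fun α β => toLex (mwt M α) ≤ toLex (mwt M β)

/-- A monomial order on `k[x₁,…,xₙ]` in the MIN convention: a total order on exponent
vectors compatible with addition in which `0` (the monomial `1`) is the greatest element. -/
structure MinMonomialOrder (n : ℕ) where
  le : (Fin n →₀ ℕ) → (Fin n →₀ ℕ) → Prop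
  total : ∀ a b, le a b ∨ le b a
  antisymm : ∀ a b, le a b → le b a → a = b
  trans : ∀ a b c, le a b → le b c → le a c
  add_le_add : ∀ a b c, le a b → le (a + c) (b + c)
  le_zero : ∀ a, le a 0

/-- `α` is the exponent of the initial (i.e. `le`-smallest) term of `f`. -/
def IsLeadExp {k : Type} [Field k] {n : ℕ} (mo : MinMonomialOrder n)
    (f : MvPolynomial (Fin n) k) (α : Fin n →₀ ℕ) : Prop :=
  α ∈ f.support ∧ ∀ β ∈ f.support, mo.le α β

/-- `G` is the reduced Gröbner basis of `I` with respect to the monomial order `mo`: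
`G ⊆ I`, the initial terms of `G` generate the initial ideal of `I`, every `g ∈ G` is monic,
no initial term of one element divides the initial term of another, and no non-initial term
of any `g ∈ G` is divisible by the initial term of any `g' ∈ G`.  (Divisibility of monomials
is the componentwise order `≤` on exponents.) -/
def IsReducedGB {k : Type} [Field k] {n : ℕ} (mo : MinMonomialOrder n)
    (I : Ideal (MvPolynomial (Fin n) k)) (G : Finset (MvPolynomial (Fin n) k)) : Prop :=
  (↑G : Set (MvPolynomial (Fin n) k)) ⊆ ↑I ∧ (0 : MvPolynomial (Fin n) k) ∉ G ∧
  initialIdeal mo.le I = Ideal.span ((fun g => initialForm mo.le g) '' ↑G) ∧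
  (∀ g ∈ G, ∀ α, IsLeadExp mo g α → MvPolynomial.coeff α g = 1) ∧
  (∀ g ∈ G, ∀ g' ∈ G, g ≠ g' → ∀ α α', IsLeadExp mo g α → IsLeadExp mo g' α' → ¬ α' ≤ α) ∧
  (∀ g ∈ G, ∀ g' ∈ G, ∀ β ∈ g.support, ¬ IsLeadExp mo g β →
    ∀ α', IsLeadExp mo g' α' → ¬ α' ≤ β)

/-- The `d`-weighted homogeneous component of degree `m` of a polynomial. -/
noncomputable def homComponent {k : Type} [Field k] {n : ℕ} (d : Fin n → ℕ) (m : ℕ)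
    (f : MvPolynomial (Fin n) k) : MvPolynomial (Fin n) k :=
  ∑ α ∈ f.support.filter (fun α => (∑ j, d j * α j) = m),
    monomial α (MvPolynomial.coeff α f)

set_option linter.unusedVariables false
set_option maxHeartbeats 1000000

namespace S7
open Finset
open scoped Classical
variable {k : Type} [Field k] {n : ℕ}

section CompBasic
variable {Γ : Type*} (w : (Fin n →₀ ℕ) → Γ)

/-- the `w`-weight-`v` component of `f` -/
noncomputable def comp (v : Γ) (f : MvPolynomial (Fin n) k) : MvPolynomial (Fin n) k :=
  letI := Classical.decEq Γ
  ∑ α ∈ f.support.filter (fun α => w α = v), monomial α (coeff α f)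

lemma coeff_comp (v : Γ) (f : MvPolynomial (Fin n) k) (β : Fin n →₀ ℕ) :
    coeff β (comp w v f) = if w β = v then coeff β f else 0 := by
  rw [comp, coeff_sum]
  simp only [coeff_monomial]
  rw [Finset.sum_ite_eq' (f.support.filter (fun α => w α = v)) β (fun α => coeff α f)]
  by_cases h1 : w β = v <;> by_cases h2 : coeff β f = 0 <;>
    simp [h1, h2, Finset.mem_filter, MvPolynomial.mem_support_iff]

lemma mem_support_comp {v : Γ} {f : MvPolynomial (Fin n) k} {β : Fin n →₀ ℕ} :
    β ∈ (comp w v f).support ↔ β ∈ f.support ∧ w β = v := by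
  simp only [MvPolynomial.mem_support_iff, coeff_comp]
  by_cases h : w β = v <;> simp [h]

lemma comp_add (v : Γ) (f g : MvPolynomial (Fin n) k) :
    comp w v (f + g) = comp w v f + comp w v g := by
  ext β; simp only [coeff_comp, coeff_add]; split <;> simp

lemma comp_zero (v : Γ) : comp w v (0 : MvPolynomial (Fin n) k) = 0 := by
  ext β; simp [coeff_comp]

lemma comp_sum (v : Γ) {ι : Type*} (s : Finset ι) (F : ι → MvPolynomial (Fin n) k) :
    comp w v (∑ i ∈ s, F i) = ∑ i ∈ s, comp w v (F i) := by
  induction s using Finset.induction_on with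
  | empty => simp [comp_zero]
  | insert _ _ h ih => rw [Finset.sum_insert h, Finset.sum_insert h, comp_add, ih]

lemma comp_of_hom {v u : Γ} {f : MvPolynomial (Fin n) k}
    (hf : ∀ β ∈ f.support, w β = u) :
    comp w v f = if v = u then f else 0 := by
  ext β
  by_cases hb : coeff β f = 0
  · simp only [coeff_comp, hb]; split <;> split <;> simp [hb]
  · have hwb := hf β (by simpa [MvPolynomial.mem_support_iff] using hb)
    simp only [coeff_comp, hwb]
    by_cases h : v = u
    · simp [h]
    · simp only [if_neg h, if_neg (fun hh : u = v => h hh.symm)]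
      simp

lemma sum_comp (f : MvPolynomial (Fin n) k) :
    ∑ v ∈ f.support.image w, comp w v f = f := by
  ext β
  rw [coeff_sum]
  simp only [coeff_comp]
  rw [Finset.sum_ite_eq (f.support.image w) (w β) (fun _ => coeff β f)]
  by_cases hb : coeff β f = 0
  · split <;> simp [hb]
  · have : w β ∈ f.support.image w :=
      Finset.mem_image_of_mem w (by simpa [MvPolynomial.mem_support_iff] using hb)
    simp [this]

lemma comp_hom (v : Γ) (f : MvPolynomial (Fin n) k) :
    ∀ β ∈ (comp w v f).support, w β = v := fun β hb => ((mem_support_comp w).1 hb).2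

end CompBasic

section Ordered
variable {Γ : Type*} [AddCommGroup Γ] [LinearOrder Γ] [IsOrderedAddMonoid Γ]
variable (w : (Fin n →₀ ℕ) → Γ)

/-- comparison by weight -/
def wle : (Fin n →₀ ℕ) → (Fin n →₀ ℕ) → Prop := fun a b => w a ≤ w b

lemma coeff_initialForm (le : (Fin n →₀ ℕ) → (Fin n →₀ ℕ) → Prop)
    (f : MvPolynomial (Fin n) k) (β : Fin n →₀ ℕ) :
    coeff β (initialForm le f) =
      if β ∈ f.support ∧ ∀ γ ∈ f.support, le β γ then coeff β f else 0 := by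
  rw [initialForm, coeff_sum]
  simp only [coeff_monomial]
  rw [Finset.sum_ite_eq' _ β (fun α => coeff α f)]
  simp only [Finset.mem_filter]

lemma comp_monomial_mul (hw : ∀ a b, w (a + b) = w a + w b) (v : Γ) (a : Fin n →₀ ℕ) (c : k) (f : MvPolynomial (Fin n) k) :
    comp w v (monomial a c * f) = monomial a c * comp w (v - w a) f := by
  ext β
  rw [coeff_comp, MvPolynomial.coeff_monomial_mul', MvPolynomial.coeff_monomial_mul', coeff_comp]
  by_cases hab : a ≤ β
  · have h3 : (w (β - a) = v - w a) ↔ (w β = v) := by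
      rw [eq_sub_iff_add_eq', ← hw, add_tsub_cancel_of_le hab]
    simp only [if_pos hab, h3]
    split <;> simp
  · simp [if_neg hab]

lemma comp_mul_of_hom (hw : ∀ a b, w (a + b) = w a + w b) {u : Γ} {q : MvPolynomial (Fin n) k} (hq : ∀ α ∈ q.support, w α = u)
    (v : Γ) (f : MvPolynomial (Fin n) k) :
    comp w v (q * f) = q * comp w (v - u) f := by
  conv_lhs => rw [MvPolynomial.as_sum q]
  rw [Finset.sum_mul, comp_sum]
  rw [Finset.sum_congr rfl (fun α hα => by
    rw [comp_monomial_mul w hw, hq α hα] :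
      ∀ α ∈ q.support, comp w v (monomial α (coeff α q) * f)
        = monomial α (coeff α q) * comp w (v - u) f)]
  rw [← Finset.sum_mul, ← MvPolynomial.as_sum]

/-- the minimal weight of a nonzero polynomial -/
noncomputable def minwt (f : MvPolynomial (Fin n) k) : Γ :=
  if h : f = 0 then 0
  else (f.support.image w).min' (Finset.image_nonempty.2 (MvPolynomial.support_nonempty.2 h))

lemma minwt_le {f : MvPolynomial (Fin n) k} {β : Fin n →₀ ℕ} (hβ : β ∈ f.support) :
    minwt w f ≤ w β := by
  have hf : f ≠ 0 := fun h0 => by simp [h0] at hβ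
  rw [minwt, dif_neg hf]
  exact Finset.min'_le _ _ (Finset.mem_image_of_mem w hβ)

lemma exists_minwt {f : MvPolynomial (Fin n) k} (hf : f ≠ 0) :
    ∃ β ∈ f.support, w β = minwt w f := by
  rw [minwt, dif_neg hf]
  have := Finset.min'_mem (f.support.image w)
    (Finset.image_nonempty.2 (MvPolynomial.support_nonempty.2 hf))
  obtain ⟨β, hβ, hβ'⟩ := Finset.mem_image.1 this
  exact ⟨β, hβ, hβ'⟩

lemma initialForm_eq_comp {f : MvPolynomial (Fin n) k} (hf : f ≠ 0) :
    initialForm (wle w) f = comp w (minwt w f) f := by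
  ext β
  rw [coeff_initialForm, coeff_comp]
  by_cases hβ : β ∈ f.support
  · have hiff : (∀ γ ∈ f.support, wle w β γ) ↔ w β = minwt w f := by
      constructor
      · intro h
        obtain ⟨γ, hγ, hγ'⟩ := exists_minwt w hf
        exact le_antisymm (hγ' ▸ h γ hγ) (minwt_le w hβ)
      · intro h γ hγ
        exact le_trans (le_of_eq h) (minwt_le w hγ)
    by_cases h : w β = minwt w f
    · rw [if_pos ⟨hβ, hiff.2 h⟩, if_pos h]
    · rw [if_neg (fun hh => h (hiff.1 hh.2)), if_neg h]
  · have h0 : coeff β f = 0 := by simpa [MvPolynomial.mem_support_iff] using hβ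
    rw [h0]
    split <;> split <;> rfl

lemma support_initialForm {f : MvPolynomial (Fin n) k} (hf : f ≠ 0) {β : Fin n →₀ ℕ} :
    β ∈ (initialForm (wle w) f).support ↔ β ∈ f.support ∧ w β = minwt w f := by
  rw [initialForm_eq_comp w hf, mem_support_comp]

lemma initialForm_ne_zero {f : MvPolynomial (Fin n) k} (hf : f ≠ 0) :
    initialForm (wle w) f ≠ 0 := by
  obtain ⟨β, hβ, hβ'⟩ := exists_minwt w hf
  intro h0
  have : β ∈ (initialForm (wle w) f).support := (support_initialForm w hf).2 ⟨hβ, hβ'⟩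
  rw [h0] at this
  simp at this

lemma comp_mem_initialIdeal (hw : ∀ a b, w (a + b) = w a + w b) {I : Ideal (MvPolynomial (Fin n) k)}
    {g : MvPolynomial (Fin n) k} (hg : g ∈ initialIdeal (wle w) I) (v : Γ) :
    comp w v g ∈ initialIdeal (wle w) I := by
  rw [initialIdeal] at hg
  revert v
  induction hg using Submodule.span_induction with
  | mem x hx =>
    intro v
    obtain ⟨f, hfI, hf0, rfl⟩ := hx
    rw [initialForm_eq_comp w hf0, comp_of_hom w (comp_hom w _ f)]
    split
    · exact Ideal.subset_span ⟨f, hfI, hf0, (initialForm_eq_comp w hf0).symm⟩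
    · exact zero_mem _
  | zero => intro v; rw [comp_zero]; exact zero_mem _
  | add x y hx hy ihx ihy => intro v; rw [comp_add]; exact add_mem (ihx v) (ihy v)
  | smul a x hx ih =>
    intro v
    rw [smul_eq_mul]
    induction a using MvPolynomial.induction_on' with
    | monomial u c =>
      rw [comp_monomial_mul w hw]
      exact Ideal.mul_mem_left _ _ (ih _)
    | add p q hp hq =>
      rw [add_mul, comp_add]
      exact add_mem hp hq

lemma exists_rep (hw : ∀ a b, w (a + b) = w a + w b)
    {I : Ideal (MvPolynomial (Fin n) k)} {g : MvPolynomial (Fin n) k} {v : Γ}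
    (hg : g ∈ initialIdeal (wle w) I) (hhom : ∀ β ∈ g.support, w β = v) :
    ∃ h ∈ I, (∀ β ∈ h.support, v ≤ w β) ∧ comp w v h = g := by
  rw [initialIdeal] at hg
  obtain ⟨c, hcs, hsum⟩ := Submodule.mem_span_set.1 hg
  choose F hFI hF0 hFform using fun (p : MvPolynomial (Fin n) k) (hp : p ∈ c.support) =>
    hcs hp
  set m : {p // p ∈ c.support} → Γ := fun p => minwt w (F p.1 p.2) with hm
  set h : MvPolynomial (Fin n) k :=
    ∑ p ∈ c.support.attach, comp w (v - m p) (c p.1) * F p.1 p.2 with hh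
  have hphom : ∀ p : {p // p ∈ c.support}, ∀ β ∈ (p.1 : MvPolynomial (Fin n) k).support,
      w β = m p := by
    intro p β hβ
    rw [hFform p.1 p.2, initialForm_eq_comp w (hF0 p.1 p.2)] at hβ
    exact comp_hom w _ _ β hβ
  have hterm : ∀ p ∈ c.support.attach,
      comp w v (comp w (v - m p) (c p.1) * F p.1 p.2)
        = comp w (v - m p) (c p.1) * p.1 := by
    intro p _
    rw [comp_mul_of_hom w hw (comp_hom w (v - m p) (c p.1)), sub_sub_cancel,
      ← initialForm_eq_comp w (hF0 p.1 p.2), ← hFform p.1 p.2]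
  have hgterm : ∀ p ∈ c.support.attach,
      comp w v (c p.1 * p.1) = comp w (v - m p) (c p.1) * p.1 := by
    intro p _
    rw [mul_comm, comp_mul_of_hom w hw (hphom p), mul_comm]
  have hcomph : comp w v h = g := by
    rw [hh, comp_sum, Finset.sum_congr rfl hterm]
    have hg2 : g = ∑ p ∈ c.support.attach, c p.1 * p.1 := by
      rw [← hsum, Finsupp.sum, ← Finset.sum_attach c.support (fun p => c p • p)]
      exact Finset.sum_congr rfl (fun p _ => rfl)
    have hgv : comp w v g = g := by rw [comp_of_hom w hhom, if_pos rfl]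
    conv_rhs => rw [← hgv, hg2, comp_sum]
    exact (Finset.sum_congr rfl hgterm).symm
  refine ⟨h, ?_, ?_, hcomph⟩
  · exact Submodule.sum_mem _ (fun p _ => Ideal.mul_mem_left _ _ (hFI p.1 p.2))
  · intro β hβ
    classical
    obtain ⟨p, hp, hβp⟩ := Finset.mem_biUnion.1 (MvPolynomial.support_sum hβ)
    obtain ⟨γ, hγ, δ, hδ, hγδ⟩ := Finset.mem_add.1 (MvPolynomial.support_mul _ _ hβp)
    have hwγ : w γ = v - m p := comp_hom w _ _ γ hγ
    have hwδ : m p ≤ w δ := minwt_le w hδ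
    calc v = (v - m p) + m p := (sub_add_cancel v (m p)).symm
      _ ≤ (v - m p) + w δ := add_le_add_right hwδ _
      _ = w γ + w δ := by rw [hwγ]
      _ = w β := by rw [← hw, hγδ]

lemma mo_min_aux (mo : MinMonomialOrder n) :
    ∀ s : Finset (Fin n →₀ ℕ), s.Nonempty → ∃ α ∈ s, ∀ β ∈ s, mo.le α β := by
  intro s
  induction s using Finset.induction_on with
  | empty => intro hs; simp at hs
  | @insert a t ha ih =>
    intro _
    by_cases ht : t.Nonempty
    · obtain ⟨α, hα, hmin⟩ := ih ht
      rcases mo.total a α with h | h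
      · refine ⟨a, Finset.mem_insert_self _ _, fun β hβ => ?_⟩
        rcases Finset.mem_insert.1 hβ with rfl | hβ
        · exact (mo.total β β).elim id id
        · exact mo.trans _ _ _ h (hmin β hβ)
      · refine ⟨α, Finset.mem_insert_of_mem hα, fun β hβ => ?_⟩
        rcases Finset.mem_insert.1 hβ with rfl | hβ
        · exact h
        · exact hmin β hβ
    · rw [Finset.not_nonempty_iff_eq_empty] at ht
      subst ht
      refine ⟨a, Finset.mem_insert_self _ _, fun β hβ => ?_⟩
      rcases Finset.mem_insert.1 hβ with rfl | hβ
      · exact (mo.total β β).elim id id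
      · simp at hβ

lemma initialForm_mo_eq (mo : MinMonomialOrder n) {f : MvPolynomial (Fin n) k}
    {α : Fin n →₀ ℕ} (hα : α ∈ f.support) (hmin : ∀ β ∈ f.support, mo.le α β) :
    initialForm mo.le f = monomial α (coeff α f) := by
  ext β
  rw [coeff_initialForm, coeff_monomial]
  by_cases hβ : α = β
  · subst hβ
    rw [if_pos ⟨hα, hmin⟩, if_pos rfl]
  · rw [if_neg hβ, if_neg]
    rintro ⟨hβs, hβmin⟩
    exact hβ (mo.antisymm α β (hmin β hβs) (hβmin α hα))

lemma initialForm_mo_single (mo : MinMonomialOrder n) {f : MvPolynomial (Fin n) k}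
    (hf : f ≠ 0) :
    ∃ α ∈ f.support, (∀ β ∈ f.support, mo.le α β) ∧
      initialForm mo.le f = monomial α (coeff α f) := by
  obtain ⟨α, hα, hmin⟩ := mo_min_aux mo f.support (MvPolynomial.support_nonempty.2 hf)
  exact ⟨α, hα, hmin, initialForm_mo_eq mo hα hmin⟩

theorem core (hw : ∀ a b, w (a + b) = w a + w b) (I : Ideal (MvPolynomial (Fin n) k))
    (mo : MinMonomialOrder n) (href : ∀ a b, mo.le a b → w a ≤ w b) :
    initialIdeal mo.le (initialIdeal (wle w) I) = initialIdeal mo.le I := by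
  apply le_antisymm
  · rw [show initialIdeal mo.le (initialIdeal (wle w) I) = Ideal.span _ from rfl]
    apply Ideal.span_le.2
    rintro x ⟨g, hgJ, hg0, rfl⟩
    obtain ⟨α, hα, hmin, hform⟩ := initialForm_mo_single mo hg0
    set v := w α with hv
    have hgv_mem := comp_mem_initialIdeal w hw hgJ v
    have hα' : α ∈ (comp w v g).support := (mem_support_comp w).2 ⟨hα, rfl⟩
    obtain ⟨h, hhI, hbd, hcomp⟩ := exists_rep w hw hgv_mem (comp_hom w v g)
    have hcoeff : ∀ β, w β = v → coeff β h = coeff β (comp w v g) := by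
      intro β hβ
      rw [← hcomp, coeff_comp, if_pos hβ]
    have hαh : α ∈ h.support := by
      rw [MvPolynomial.mem_support_iff, hcoeff α rfl]
      exact (MvPolynomial.mem_support_iff).1 hα'
    have hh0 : h ≠ 0 := fun h0 => by simp [h0] at hαh
    have hminh : ∀ β ∈ h.support, mo.le α β := by
      intro β hβ
      rcases mo.total α β with h1 | h1
      · exact h1
      · have h3 : w β = v := le_antisymm (href _ _ h1) (hbd β hβ)
        have hβg : β ∈ g.support := by
          have hc := hcoeff β h3
          rw [MvPolynomial.mem_support_iff] at hβ
          rw [hc, coeff_comp, if_pos h3] at hβ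
          exact (MvPolynomial.mem_support_iff).2 hβ
        exact hmin β hβg
    have hcα : coeff α h = coeff α g := by
      rw [hcoeff α rfl, coeff_comp, if_pos rfl]
    rw [hform, ← hcα, ← initialForm_mo_eq mo hαh hminh]
    exact Ideal.subset_span ⟨h, hhI, hh0, rfl⟩
  · rw [show initialIdeal mo.le I = Ideal.span _ from rfl]
    apply Ideal.span_le.2
    rintro x ⟨f, hfI, hf0, rfl⟩
    have h1 : initialForm (wle w) f ∈ initialIdeal (wle w) I :=
      Ideal.subset_span ⟨f, hfI, hf0, rfl⟩
    have h2 : initialForm (wle w) f ≠ 0 := initialForm_ne_zero w hf0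
    obtain ⟨α, hα, hmin, hform⟩ := initialForm_mo_single mo hf0
    have hwα : w α = minwt w f := by
      obtain ⟨β, hβ, hβ'⟩ := exists_minwt w hf0
      exact le_antisymm (hβ' ▸ href _ _ (hmin β hβ)) (minwt_le w hα)
    have hα' : α ∈ (initialForm (wle w) f).support :=
      (support_initialForm w hf0).2 ⟨hα, hwα⟩
    have hmin' : ∀ β ∈ (initialForm (wle w) f).support, mo.le α β := fun β hβ =>
      hmin β ((support_initialForm w hf0).1 hβ).1
    have hcα : coeff α (initialForm (wle w) f) = coeff α f := by
      rw [initialForm_eq_comp w hf0, coeff_comp, if_pos hwα]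
    rw [hform, ← hcα, ← initialForm_mo_eq mo hα' hmin']
    exact Ideal.subset_span ⟨initialForm (wle w) f, h1, h2, rfl⟩

end Ordered

section Bridge
variable {Γ : Type*} [AddCommGroup Γ] [LinearOrder Γ] [IsOrderedAddMonoid Γ]

lemma initialIdeal_le_of_deg (w₁ w₂ : (Fin n →₀ ℕ) → Γ) (dg : (Fin n →₀ ℕ) → ℕ)
    (hcomp : ∀ α β, dg α = dg β → (w₁ α ≤ w₁ β ↔ w₂ α ≤ w₂ β))
    (I : Ideal (MvPolynomial (Fin n) k)) (hI : ∀ f ∈ I, ∀ m : ℕ, comp dg m f ∈ I) :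
    initialIdeal (wle w₁) I ≤ initialIdeal (wle w₂) I := by
  rw [show initialIdeal (wle w₁) I = Ideal.span _ from rfl]
  apply Ideal.span_le.2
  rintro x ⟨f, hfI, hf0, rfl⟩
  set v := minwt w₁ f with hv
  set S : Finset ℕ := (f.support.filter (fun β => w₁ β = v)).image dg with hS
  have hwit : ∀ m ∈ S, ∃ β ∈ f.support, w₁ β = v ∧ dg β = m := by
    intro m hm
    obtain ⟨β, hβ, hdgβ⟩ := Finset.mem_image.1 hm
    obtain ⟨hβs, hβv⟩ := Finset.mem_filter.1 hβ
    exact ⟨β, hβs, hβv, hdgβ⟩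
  have hfm0 : ∀ m ∈ S, comp dg m f ≠ 0 := by
    intro m hm
    obtain ⟨β, hβs, hβv, hβd⟩ := hwit m hm
    intro h0
    have : β ∈ (comp dg m f).support := (mem_support_comp dg).2 ⟨hβs, hβd⟩
    rw [h0] at this; simp at this
  have hminm : ∀ m ∈ S, minwt w₁ (comp dg m f) = v := by
    intro m hm
    obtain ⟨β, hβs, hβv, hβd⟩ := hwit m hm
    have hβm : β ∈ (comp dg m f).support := (mem_support_comp dg).2 ⟨hβs, hβd⟩
    apply le_antisymm
    · exact hβv ▸ minwt_le w₁ hβm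
    · obtain ⟨γ, hγ, hγ'⟩ := exists_minwt w₁ (hfm0 m hm)
      exact hγ' ▸ (hv ▸ minwt_le w₁ ((mem_support_comp dg).1 hγ).1)
  have key : initialForm (wle w₁) f = ∑ m ∈ S, initialForm (wle w₁) (comp dg m f) := by
    ext β
    rw [initialForm_eq_comp w₁ hf0, coeff_comp, coeff_sum]
    rw [Finset.sum_congr rfl (fun m hm => by
      rw [initialForm_eq_comp w₁ (hfm0 m hm), hminm m hm, coeff_comp, coeff_comp]
      exact ite_congr rfl (fun _ => ite_congr rfl (fun _ => rfl) (fun _ => rfl)) (fun _ => rfl) :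
        ∀ m ∈ S, coeff β (initialForm (wle w₁) (comp dg m f))
          = if w₁ β = v then (if dg β = m then coeff β f else 0) else 0)]
    by_cases hβv : w₁ β = v
    · simp only [if_pos hβv, if_pos (hβv.trans hv)]
      rw [Finset.sum_ite_eq S (dg β) (fun _ => coeff β f)]
      by_cases hc : coeff β f = 0
      · split <;> simp [hc]
      · have hβS : dg β ∈ S := Finset.mem_image_of_mem dg
          (Finset.mem_filter.2 ⟨(MvPolynomial.mem_support_iff).2 hc, hβv⟩)
        rw [if_pos hβS]
    · simp [if_neg hβv, if_neg (fun hh : w₁ β = minwt w₁ f => hβv (hh.trans hv.symm))]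
  have hforms : ∀ m ∈ S, initialForm (wle w₁) (comp dg m f)
      = initialForm (wle w₂) (comp dg m f) := by
    intro m hm
    ext β
    rw [coeff_initialForm, coeff_initialForm]
    by_cases hβ : β ∈ (comp dg m f).support
    · have hdgβ : dg β = m := comp_hom dg m f β hβ
      have hiff : (∀ γ ∈ (comp dg m f).support, wle w₁ β γ)
          ↔ (∀ γ ∈ (comp dg m f).support, wle w₂ β γ) := by
        refine forall₂_congr (fun γ hγ => ?_)
        exact hcomp β γ (by rw [hdgβ, comp_hom dg m f γ hγ])
      by_cases hc : β ∈ (comp dg m f).support ∧ ∀ γ ∈ (comp dg m f).support, wle w₁ β γ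
      · rw [if_pos hc, if_pos ⟨hc.1, hiff.1 hc.2⟩]
      · rw [if_neg hc, if_neg (fun hc2 => hc ⟨hc2.1, hiff.2 hc2.2⟩)]
    · rw [if_neg (fun hc => hβ hc.1), if_neg (fun hc => hβ hc.1)]
  rw [key, Finset.sum_congr rfl hforms]
  exact Submodule.sum_mem _ (fun m hm =>
    Ideal.subset_span ⟨comp dg m f, hI f hfI m, hfm0 m hm, rfl⟩)

lemma initialIdeal_eq_of_deg (w₁ w₂ : (Fin n →₀ ℕ) → Γ) (dg : (Fin n →₀ ℕ) → ℕ)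
    (hcomp : ∀ α β, dg α = dg β → (w₁ α ≤ w₁ β ↔ w₂ α ≤ w₂ β))
    (I : Ideal (MvPolynomial (Fin n) k)) (hI : ∀ f ∈ I, ∀ m : ℕ, comp dg m f ∈ I) :
    initialIdeal (wle w₁) I = initialIdeal (wle w₂) I :=
  le_antisymm (initialIdeal_le_of_deg w₁ w₂ dg hcomp I hI)
    (initialIdeal_le_of_deg w₂ w₁ dg (fun α β h => (hcomp α β h).symm) I hI)

end Bridge

section MoConstr
variable {r : ℕ}

noncomputable def wM (M : Matrix (Fin r) (Fin n) ℚ) : (Fin n →₀ ℕ) → Lex (Fin r → ℚ) :=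
  fun a => toLex (mwt M a)

lemma mwt_add (M : Matrix (Fin r) (Fin n) ℚ) (a b : Fin n →₀ ℕ) :
    mwt M (a + b) = mwt M a + mwt M b := by
  funext i
  simp only [mwt, Pi.add_apply]
  rw [← Finset.sum_add_distrib]
  apply Finset.sum_congr rfl
  intro j _
  rw [Finsupp.add_apply]
  push_cast
  ring

lemma wM_add (M : Matrix (Fin r) (Fin n) ℚ) (a b : Fin n →₀ ℕ) :
    wM M (a + b) = wM M a + wM M b := by
  show toLex (mwt M (a + b)) = toLex (mwt M a) + toLex (mwt M b)
  rw [mwt_add]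
  rfl

def tvec : (Fin n →₀ ℕ) → Lex (Fin n → ℚ) := fun a => toLex (fun j => (a j : ℚ))

lemma tvec_add (a b : Fin n →₀ ℕ) : tvec (a + b) = tvec a + tvec b := by
  have h : (fun j => (((a + b) j : ℕ) : ℚ))
      = (fun j => ((a j : ℕ) : ℚ)) + (fun j => ((b j : ℕ) : ℚ)) := by
    funext j
    simp [Finsupp.add_apply]
  exact congrArg toLex h

lemma tvec_inj {a b : Fin n →₀ ℕ} (h : tvec a = tvec b) : a = b := by
  have h2 : (fun j => ((a j : ℕ) : ℚ)) = (fun j => ((b j : ℕ) : ℚ)) := h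
  exact Finsupp.ext fun j => Nat.cast_injective (congrFun h2 j)

noncomputable def moOfM (M : Matrix (Fin r) (Fin n) ℚ) (hM : ∀ i j, M i j ≤ 0) :
    MinMonomialOrder n where
  le a b := wM M a < wM M b ∨ (wM M a = wM M b ∧ tvec b ≤ tvec a)
  total a b := by
    rcases lt_trichotomy (wM M a) (wM M b) with h | h | h
    · exact Or.inl (Or.inl h)
    · rcases le_total (tvec b) (tvec a) with ht | ht
      · exact Or.inl (Or.inr ⟨h, ht⟩)
      · exact Or.inr (Or.inr ⟨h.symm, ht⟩)
    · exact Or.inr (Or.inl h)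
  antisymm a b hab hba := by
    rcases hab with h1 | ⟨h1, h1t⟩ <;> rcases hba with h2 | ⟨h2, h2t⟩
    · exact absurd h2 (lt_asymm h1)
    · exact absurd h2 h1.ne'
    · exact absurd h2 (by rw [h1]; exact lt_irrefl _)
    · exact tvec_inj (le_antisymm h2t h1t)
  trans a b c hab hbc := by
    rcases hab with h1 | ⟨h1, h1t⟩ <;> rcases hbc with h2 | ⟨h2, h2t⟩
    · exact Or.inl (lt_trans h1 h2)
    · exact Or.inl (h2 ▸ h1)
    · exact Or.inl (h1 ▸ h2)
    · exact Or.inr ⟨h1.trans h2, le_trans h2t h1t⟩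
  add_le_add a b c h := by
    rcases h with h | ⟨h, ht⟩
    · exact Or.inl (by rw [wM_add, wM_add]; exact add_lt_add_left h _)
    · refine Or.inr ⟨by rw [wM_add, wM_add, h], ?_⟩
      rw [tvec_add, tvec_add]
      exact add_le_add_left ht _
  le_zero a := by
    have hle : wM M a ≤ wM M 0 := by
      apply Pi.toLex_monotone
      intro i
      have h0 : mwt M 0 i = 0 := by simp [mwt]
      rw [h0]
      apply Finset.sum_nonpos
      intro j _
      exact mul_nonpos_iff.2 (Or.inr ⟨hM i j, Nat.cast_nonneg _⟩)
    rcases lt_or_eq_of_le hle with h | h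
    · exact Or.inl h
    · refine Or.inr ⟨h, ?_⟩
      apply Pi.toLex_monotone
      intro j
      simp

lemma moOfM_refine (M : Matrix (Fin r) (Fin n) ℚ) (hM : ∀ i j, M i j ≤ 0) :
    ∀ a b, (moOfM M hM).le a b → wM M a ≤ wM M b := by
  intro a b h
  rcases h with h | ⟨h, _⟩
  · exact le_of_lt h
  · exact le_of_eq h

theorem part1 (I : Ideal (MvPolynomial (Fin n) k)) (M : Matrix (Fin r) (Fin n) ℚ)
    (hM : ∀ i j, M i j ≤ 0) :
    ∃ mo : MinMonomialOrder n,
      initialIdeal mo.le (initialIdeal (mLe M) I) = initialIdeal mo.le I := by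
  refine ⟨moOfM M hM, ?_⟩
  have heq : mLe M = wle (wM M) := rfl
  rw [heq]
  exact core (wM M) (wM_add M) I (moOfM M hM) (moOfM_refine M hM)

theorem part2 (I : Ideal (MvPolynomial (Fin n) k)) (d : Fin n → ℕ) (hd : ∀ j, 0 < d j)
    (hIhom : ∀ f ∈ I, ∀ m : ℕ, homComponent d m f ∈ I) (M : Matrix (Fin r) (Fin n) ℚ) :
    ∃ mo : MinMonomialOrder n,
      initialIdeal mo.le (initialIdeal (mLe M) I) = initialIdeal mo.le I := by
  set dg : (Fin n →₀ ℕ) → ℕ := fun α => ∑ j, d j * α j with hdg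
  have coeffhc : ∀ (m : ℕ) (f : MvPolynomial (Fin n) k) (β : Fin n →₀ ℕ),
      coeff β (homComponent d m f) = if dg β = m then coeff β f else 0 := by
    intro m f β
    rw [homComponent, coeff_sum]
    simp only [coeff_monomial]
    rw [Finset.sum_ite_eq' _ β (fun α => coeff α f)]
    by_cases h1 : dg β = m <;> by_cases h2 : coeff β f = 0 <;>
      simp [hdg, h1, h2, Finset.mem_filter, MvPolynomial.mem_support_iff]
  have hhc : ∀ (m : ℕ) (f : MvPolynomial (Fin n) k), homComponent d m f = comp dg m f := by
    intro m f
    ext β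
    rw [coeffhc, coeff_comp]
    by_cases h : dg β = m
    · rw [if_pos h, if_pos h]
    · rw [if_neg h, if_neg h]
  set c : Fin r → ℚ := fun i => ∑ j, max (M i j) 0 with hc
  have hc0 : ∀ i, 0 ≤ c i := fun i => Finset.sum_nonneg fun j _ => le_max_right _ _
  have hcM : ∀ i j, M i j ≤ c i := fun i j =>
    le_trans (le_max_left _ _)
      (Finset.single_le_sum (fun j _ => le_max_right (M i j) 0) (Finset.mem_univ j))
  set M'' : Matrix (Fin r) (Fin n) ℚ := fun i j => M i j - c i * d j with hM''
  have hM''neg : ∀ i j, M'' i j ≤ 0 := by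
    intro i j
    have h1 : c i * 1 ≤ c i * d j := by
      apply mul_le_mul_of_nonneg_left _ (hc0 i)
      exact_mod_cast Nat.one_le_iff_ne_zero.2 (Nat.pos_iff_ne_zero.1 (hd j))
    have h2 := hcM i j
    simp only [hM'']
    rw [mul_one] at h1
    linarith
  have hrel : ∀ α : Fin n →₀ ℕ, mwt M'' α = mwt M α - fun i => c i * (dg α : ℚ) := by
    intro α
    funext i
    simp only [mwt, Pi.sub_apply, hM'']
    rw [hdg]
    push_cast
    rw [Finset.mul_sum, ← Finset.sum_sub_distrib]
    apply Finset.sum_congr rfl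
    intro j _
    ring
  have hcomp : ∀ α β, dg α = dg β → ((wM M α ≤ wM M β) ↔ (wM M'' α ≤ wM M'' β)) := by
    intro α β h
    show toLex (mwt M α) ≤ toLex (mwt M β) ↔ toLex (mwt M'' α) ≤ toLex (mwt M'' β)
    rw [hrel α, hrel β, h]
    exact (sub_le_sub_iff_right (toLex (fun i => c i * (dg β : ℚ)))).symm
  have hIdg : ∀ f ∈ I, ∀ m : ℕ, comp dg m f ∈ I := fun f hf m => (hhc m f) ▸ hIhom f hf m
  refine ⟨moOfM M'' hM''neg, ?_⟩
  have heq1 : mLe M = wle (wM M) := rfl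
  have heq2 : initialIdeal (wle (wM M)) I = initialIdeal (wle (wM M'')) I :=
    initialIdeal_eq_of_deg (wM M) (wM M'') dg hcomp I hIdg
  rw [heq1, heq2]
  exact core (wM M'') (wM_add M'') I _ (moOfM_refine M'' hM''neg)

end MoConstr
end S7

/-- **The Gröbner region contains the negative orthant** (Lemma `lem-negativeGregion`).
(1) If all entries of `M` are `≤ 0` then `M` lies in the rank-`r` Gröbner region of `I`,
i.e. there is a monomial order `>` with `in_>(in_M(I)) = in_>(I)`.
(2) If `I` is homogeneous with respect to a positive grading then `GR^r(I) = ℚ^{r×n}`. -/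
theorem stmt_7 {k : Type} [Field k] {n r : ℕ} (I : Ideal (MvPolynomial (Fin n) k)) :
    (∀ M : Matrix (Fin r) (Fin n) ℚ, (∀ i j, M i j ≤ 0) →
      ∃ mo : MinMonomialOrder n,
        initialIdeal mo.le (initialIdeal (mLe M) I) = initialIdeal mo.le I) ∧
    (∀ d : Fin n → ℕ, (∀ j, 0 < d j) →
      (∀ f ∈ I, ∀ m : ℕ, homComponent d m f ∈ I) →
      ∀ M : Matrix (Fin r) (Fin n) ℚ,
        ∃ mo : MinMonomialOrder n,
          initialIdeal mo.le (initialIdeal (mLe M) I) = initialIdeal mo.le I) :=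
  ⟨fun M hM => S7.part1 I M hM, fun d hd hhom M => S7.part2 I d hd hhom M⟩
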